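/- Let ε > 0, M > 0, a ∈ (0,1), and let V ∈ C²([a,1]) satisfy ε² V''(x) ≥ M² V(x) on (a,1), V ≥ 0 on [a,1], V(a) ≤ Λ and V(1) ≤ Λ for some Λ ≥ 0. Then V(x) ≤ Λ(exp(−M(x−a)/ε) + exp(−M(1−x)/ε)) for all x ∈ [a,1]. -/

import Mathlib

theorem stmt10 (ε M a Λ : ℝ) (hε : 0 < ε) (hM : 0 < M) (ha : 0 < a) (ha1 : a < 1)
    (hΛ : 0 ≤ Λ)
    (V : ℝ → ℝ) (hV : ContDiffOn ℝ 2 V (Set.Icc a 1))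
    (hineq : ∀ x ∈ Set.Ioo a 1, M ^ 2 * V x ≤ ε ^ 2 * deriv (deriv V) x)
    (hVpos : ∀ x ∈ Set.Icc a 1, 0 ≤ V x)
    (hVa : V a ≤ Λ) (hV1 : V 1 ≤ Λ) :
    ∀ x ∈ Set.Icc a 1,
      V x ≤ Λ * (Real.exp (-(M * (x - a)) / ε) + Real.exp (-(M * (1 - x)) / ε)) := by
  set c : ℝ := M / ε with hc
  have hc0 : 0 < c := div_pos hM hε
  set W : ℝ → ℝ := fun x => Λ * (Real.exp (c * a - c * x) + Real.exp (c * x - c)) with hWdef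
  have hWeq : ∀ x : ℝ, Λ * (Real.exp (-(M * (x - a)) / ε) + Real.exp (-(M * (1 - x)) / ε))
      = W x := by
    intro x
    simp only [hWdef, hc]
    have h1 : -(M * (x - a)) / ε = M / ε * a - M / ε * x := by field_simp; ring
    have h2 : -(M * (1 - x)) / ε = M / ε * x - M / ε:= by field_simp; ring
    rw [h1, h2]
  set W' : ℝ → ℝ := fun x => Λ * (Real.exp (c * x - c) * c - Real.exp (c * a - c * x) * c)
    with hW'def
  have hWd : ∀ x : ℝ, HasDerivAt W (W' x) x := by
    intro x
    have h1 : HasDerivAt (fun y : ℝ => c * a - c * y) (-c) x := by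
      simpa using ((hasDerivAt_id x).const_mul c).const_sub (c * a)
    have h2 : HasDerivAt (fun y : ℝ => c * y - c) c x := by
      simpa using ((hasDerivAt_id x).const_mul c).sub_const c
    have := ((h1.exp).add (h2.exp)).const_mul Λ
    refine this.congr_deriv ?_
    simp only [hW'def]; ring
  have hderivW : deriv W = W' := funext fun x => (hWd x).deriv
  have hWdd : ∀ x : ℝ, HasDerivAt W' (c ^ 2 * W x) x := by
    intro x
    have h1 : HasDerivAt (fun y : ℝ => c * a - c * y) (-c) x := by
      simpa using ((hasDerivAt_id x).const_mul c).const_sub (c * a)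
    have h2 : HasDerivAt (fun y : ℝ => c * y - c) c x := by
      simpa using ((hasDerivAt_id x).const_mul c).sub_const c
    have := (((h2.exp).mul_const c).sub ((h1.exp).mul_const c)).const_mul Λ
    refine this.congr_deriv ?_
    simp only [hWdef]; ring
  set U : ℝ → ℝ := fun x => V x - W x with hUdef
  have hWcont : Continuous W := by fun_prop
  have hUcont : ContinuousOn U (Set.Icc a 1) := hV.continuousOn.sub hWcont.continuousOn
  -- second derivative of U on the open interval
  have hV2 : ContDiffOn ℝ 2 V (Set.Ioo a 1) := hV.mono Set.Ioo_subset_Icc_self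
  have hopen : IsOpen (Set.Ioo a 1) := isOpen_Ioo
  have hVd : ∀ x ∈ Set.Ioo a 1, DifferentiableAt ℝ V x := fun x hx =>
    (hV2.contDiffAt (hopen.mem_nhds hx)).differentiableAt (by norm_num)
  have hdV : ContDiffOn ℝ 1 (deriv V) (Set.Ioo a 1) :=
    hV2.deriv_of_isOpen hopen (by norm_num)
  have hdVd : ∀ x ∈ Set.Ioo a 1, DifferentiableAt ℝ (deriv V) x := fun x hx =>
    (hdV.contDiffAt (hopen.mem_nhds hx)).differentiableAt (by norm_num)
  have hUdd : ∀ x ∈ Set.Ioo a 1, deriv (deriv U) x = deriv (deriv V) x - c ^ 2 * W x := by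
    intro x hx
    have hev : deriv U =ᶠ[nhds x] fun y => deriv V y - W' y := by
      filter_upwards [hopen.mem_nhds hx] with y hy
      exact deriv_sub (hVd y hy) (hWd y).differentiableAt |>.trans
        (by rw [(hWd y).deriv])
    rw [hev.deriv_eq, deriv_fun_sub (hdVd x hx) (hWdd x).differentiableAt, (hWdd x).deriv]
  -- second derivative bound
  have hUineq : ∀ x ∈ Set.Ioo a 1, c ^ 2 * U x ≤ deriv (deriv U) x := by
    intro x hx
    rw [hUdd x hx]
    have h := hineq x hx
    have hε2 : (0:ℝ) < ε ^ 2 := by positivity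
    have : c ^ 2 * V x ≤ deriv (deriv V) x := by
      rw [hc, div_pow]
      rw [div_mul_eq_mul_div, div_le_iff₀ hε2]
      nlinarith
    simp only [hUdef]
    nlinarith
  -- boundary values
  have hUa : U a ≤ 0 := by
    have h := Real.exp_pos (c * a - c)
    simp only [hUdef, hWdef]
    have : Real.exp (c * a - c * a) = 1 := by norm_num
    rw [this]
    nlinarith
  have hU1 : U 1 ≤ 0 := by
    have h := Real.exp_pos (c * a - c * 1)
    simp only [hUdef, hWdef]
    have : Real.exp (c * 1 - c) = 1 := by norm_num
    rw [this]
    nlinarith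
  -- maximum
  obtain ⟨x₀, hx₀, hmax⟩ := isCompact_Icc.exists_isMaxOn (Set.nonempty_Icc.2 ha1.le)
    hUcont
  have hmax' : ∀ y ∈ Set.Icc a 1, U y ≤ U x₀ := hmax
  have key : U x₀ ≤ 0 := by
    by_contra hpos
    push_neg at hpos
    have hx₀a : x₀ ≠ a := fun h => absurd (h ▸ hpos) (not_lt.2 hUa)
    have hx₀1 : x₀ ≠ 1 := fun h => absurd (h ▸ hpos) (not_lt.2 hU1)
    have hx₀Ioo : x₀ ∈ Set.Ioo a 1 :=
      ⟨lt_of_le_of_ne hx₀.1 (Ne.symm hx₀a), lt_of_le_of_ne hx₀.2 hx₀1⟩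
    -- find a small closed interval around x₀ where U > 0
    have hcontat : ContinuousAt U x₀ :=
      hUcont.continuousAt (Icc_mem_nhds hx₀Ioo.1 hx₀Ioo.2)
    have hev : ∀ᶠ y in nhds x₀, 0 < U y :=
      continuousAt_const.eventually_lt hcontat hpos
    obtain ⟨δ, hδ0, hδ⟩ := Metric.eventually_nhds_iff.1 hev
    set l : ℝ := max ((a + x₀) / 2) (x₀ - δ / 2) with hl
    set r : ℝ := min ((x₀ + 1) / 2) (x₀ + δ / 2) with hr
    have hal : a < l := lt_max_of_lt_left (by linarith [hx₀Ioo.1])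
    have hlx : l < x₀ := max_lt (by linarith [hx₀Ioo.1]) (by linarith)
    have hxr : x₀ < r := lt_min (by linarith [hx₀Ioo.2]) (by linarith)
    have hr1 : r < 1 := min_lt_of_left_lt (by linarith [hx₀Ioo.2])
    have hsub : Set.Icc l r ⊆ Set.Ioo a 1 := fun y hy =>
      ⟨lt_of_lt_of_le hal hy.1, lt_of_le_of_lt hy.2 hr1⟩
    have hUposlr : ∀ y ∈ Set.Icc l r, 0 < U y := by
      intro y hy
      apply hδ
      rw [Real.dist_eq, abs_lt]
      constructor
      · have : x₀ - δ / 2 ≤ l := le_max_right _ _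
        have := hy.1
        linarith
      · have : r ≤ x₀ + δ / 2 := min_le_right _ _
        have := hy.2
        linarith
    have hstrict : StrictConvexOn ℝ (Set.Icc l r) U := by
      apply strictConvexOn_of_deriv2_pos (convex_Icc l r)
        (hUcont.mono fun y hy => Set.Ioo_subset_Icc_self (hsub hy))
      intro y hy
      rw [interior_Icc] at hy
      have hyIoo : y ∈ Set.Ioo a 1 := hsub (Set.Ioo_subset_Icc_self hy)
      have h1 := hUineq y hyIoo
      have h2 := hUposlr y (Set.Ioo_subset_Icc_self hy)
      simp only [Function.iterate_succ, Function.iterate_zero, Function.comp_apply, id_eq]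
      calc (0:ℝ) < c ^ 2 * U y := by positivity
        _ ≤ deriv (deriv U) y := h1
    -- x₀ is a convex combination of l and r
    set t : ℝ := (r - x₀) / (r - l) with ht
    have hrl : 0 < r - l := by linarith
    have ht0 : 0 < t := div_pos (by linarith) hrl
    have ht1 : 0 < 1 - t := by
      rw [ht]
      rw [sub_pos, div_lt_one hrl]
      linarith
    have hcomb : t * l + (1 - t) * r = x₀ := by
      rw [ht]
      field_simp [hrl.ne']
      ring
    have hlt := hstrict.2 (Set.left_mem_Icc.2 (by linarith)) (Set.right_mem_Icc.2 (by linarith))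
      (by intro h; rw [h] at hlx; linarith) ht0 ht1 (by ring)
    simp only [smul_eq_mul, hcomb] at hlt
    have hUl := hmax' l ⟨hal.le, by linarith⟩
    have hUr := hmax' r ⟨by linarith, hr1.le⟩
    nlinarith
  intro x hx
  rw [hWeq x]
  have := hmax' x hx
  simp only [hUdef] at this key
  linarith
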